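/- arXiv:1610.06908 — 2 statements merged into one kernel-verified Lean document; each statement's English description precedes it below -/
import Mathlib

section
/- Inclusion embeddings compose along iterated vertical composition: for well-defined n-diagrams D, S and a well-defined l-diagram M with l > n such that the composites exist, inc(S, D∘M) ∘ inc(D, M) = inc(S∘D, M) as embeddings M ↪ S∘(D∘M) = (S∘D)∘M. -/
/-!
Data structures for quasistrict higher categories (Bar–Vicary).
A 0-diagram is a single generator; an (n+1)-diagram is a source n-diagram
together with a list of cells, each a generator name with embedding data.
Embedding data between n-diagrams is a list of n heights; composition of
embeddings adds heights at every level, and the lifted embedding `Λ(e,T)`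
has the same data as `e`.
-/

namespace QS

inductive Diagram : Type where
  | base (g : ℕ) : Diagram
  | step (s : Diagram) (c : List (ℕ × List ℕ)) : Diagram

namespace Diagram

/-- Dimension of a diagram. -/
def dim : Diagram → ℕ
  | base _ => 0
  | step s _ => s.dim + 1

/-- The source (n−1)-diagram of an n-diagram (junk at dimension 0). -/
def src : Diagram → Diagram
  | base g => base g
  | step s _ => s

/-- The list of cells: generator names with embedding data. -/
def cells : Diagram → List (ℕ × List ℕ)
  | base _ => []
  | step _ c => c

/-- The length `|D|` of a diagram. -/
def size : Diagram → ℕ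
  | base _ => 1
  | step _ c => c.length

/-- The unique generator of a 0-diagram. -/
def gen : Diagram → ℕ
  | base g => g
  | step _ _ => 0

end Diagram

/-- A signature assigns to each generator name of each dimension `k ≥ 1` a
source and a target (k−1)-diagram. -/
structure Signature where
  gsrc : ℕ → ℕ → Diagram
  gtgt : ℕ → ℕ → Diagram

/-- Data of the composite embedding `f ∘ e`: `(f ∘ e).h = e.h + f.h`
recursively at every level, i.e. pointwise addition of height data. -/
def embComp (f e : List ℕ) : List ℕ := List.zipWith (· + ·) f e

/-- Data of the lifted embedding `Λ(e, T) : T ↪ D⟨e : S → T⟩`: the same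
height data as `e` (`Λ(e,T).h = e.h`, `Λ(e,T).e = e.e`). -/
def liftEmb (e : List ℕ) (_T : Diagram) : List ℕ := e

/-- Data of the identity embedding on an n-diagram: height 0 at every level. -/
def idEmb (n : ℕ) : List ℕ := List.replicate n 0

/-- The rewrite `D⟨e : S → T⟩`: remove the copy of `S` embedded at height
`e.h` and insert `T`, with the embeddings of `T` composed with the lift of
`e.e`. -/
def rewriteDiag (D : Diagram) (e : List ℕ) (S T : Diagram) : Diagram :=
  match D with
  | .base _ => T
  | .step s c =>
      .step s (c.take (e.headD 0)
        ++ T.cells.map (fun x => (x.1, embComp (liftEmb e.tail T) x.2))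
        ++ c.drop (e.headD 0 + S.cells.length))

/-- The slice `D[i].d`, obtained by sequential rewriting from the source. -/
def slice (σ : Signature) (D : Diagram) : ℕ → Diagram
  | 0 => D.src
  | i + 1 =>
      rewriteDiag (slice σ D i) (D.cells.getD i default).2
        (σ.gsrc D.dim (D.cells.getD i default).1)
        (σ.gtgt D.dim (D.cells.getD i default).1)

/-- The target `D.t := D[|D|].d`. -/
def tgt (σ : Signature) (D : Diagram) : Diagram := slice σ D D.cells.length

/-- Iterated source `s^k`. -/
def srcIter : ℕ → Diagram → Diagram
  | 0, D => D
  | k + 1, D => srcIter k D.src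

/-- Iterated target `t^k`. -/
def tgtIter (σ : Signature) : ℕ → Diagram → Diagram
  | 0, D => D
  | k + 1, D => tgtIter σ k (tgt σ D)

/-- Well-definedness of an embedding `e : S ↪ D`: for 0-diagrams the unique
generators agree; otherwise the component embedding is well-defined, the
image is in range, and the generators and embeddings of `S` match those of
`D` at heights shifted by `e.h` (via the lift of `e.e`). -/
def wdEmb (σ : Signature) : List ℕ → Diagram → Diagram → Prop
  | e, .base g, D => e = [] ∧ D.gen = g
  | e, .step Ss Sc, D =>
      e.length = Ss.dim + 1 ∧
      e.headD 0 + Sc.length ≤ D.cells.length ∧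
      wdEmb σ e.tail Ss (slice σ D (e.headD 0)) ∧
      ∀ i < Sc.length,
        (Sc.getD i default).1 = (D.cells.getD (i + e.headD 0) default).1 ∧
        embComp e.tail (Sc.getD i default).2
          = (D.cells.getD (i + e.headD 0) default).2

/-- Auxiliary well-definedness predicate for diagrams, by dimension. -/
def wdAux (σ : Signature) : ℕ → Diagram → Prop
  | 0, _ => True
  | n + 1, D =>
      wdAux σ n D.src ∧
      ∀ i < D.cells.length,
        wdEmb σ (D.cells.getD i default).2
          (σ.gsrc (n + 1) (D.cells.getD i default).1) (slice σ D i) ∧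
        wdAux σ n (slice σ D (i + 1))

/-- Well-definedness of a diagram: the source is well-defined and every
slice exists and is well-defined. -/
def wdDiagram (σ : Signature) (D : Diagram) : Prop := wdAux σ D.dim D

/-- Two n-diagrams are globular when n = 0, or they have equal sources and
equal targets. -/
def globular (σ : Signature) (S T : Diagram) : Prop :=
  match S with
  | .base _ => True
  | .step _ _ => S.src = T.src ∧ tgt σ S = tgt σ T

/-- Vertical composite of two n-diagrams (`S` below `D`): the source of `S`
together with the concatenated cell lists. -/
def vcomp (S D : Diagram) : Diagram :=
  match S with
  | .base g => .base g
  | .step s c => .step s (c ++ D.cells)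

/-- Data of the inclusion embedding `inc(S, D) : D ↪ S ∘ D` of an n-diagram
`D` into its composite with an m-diagram `S` of size `sLen`, `m ≤ n`. -/
def incData (m sLen : ℕ) : ℕ → List ℕ
  | 0 => []
  | k + 1 => if m = k + 1 then sLen :: List.replicate k 0
             else 0 :: incData m sLen k

/-- Composite `S ∘ D` where `S` has dimension ≤ that of `D`: `S` is attached
on the source side of the shared boundary, so the embeddings of the cells of
`D` are composed with the inclusion embeddings. -/
def compL (S D : Diagram) : Diagram :=
  match D with
  | .base g => .base g
  | .step s c =>
      if S.dim = s.dim + 1 then vcomp S D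
      else .step (compL S s)
        (c.map fun x => (x.1, embComp (incData S.dim S.size s.dim) x.2))

/-- Composite `D ∘ X` where `X` has dimension ≤ that of `D`: `X` is attached
on the target side of the shared boundary, so the cell data of `D` is
unchanged and only the deep source changes. -/
def compR (D X : Diagram) : Diagram :=
  match D with
  | .base g => .base g
  | .step s c =>
      if X.dim = s.dim + 1 then vcomp D X
      else .step (compR s X) c

/-- The composite `X ∘ Y` of two diagrams along their unique common
boundary, determined by their dimensions. -/
def comp (X Y : Diagram) : Diagram :=
  if X.dim ≤ Y.dim then compL X Y else compR X Y

/-- The identity (n+1)-diagram on an n-diagram: source `D`, no cells. -/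
def idDiag (D : Diagram) : Diagram := .step D []

/-- Composability of `X ∘ Y`: the matching condition on iterated
sources/targets along the shared boundary. -/
def composable (σ : Signature) (X Y : Diagram) : Prop :=
  if X.dim ≤ Y.dim then tgt σ X = srcIter (Y.dim - X.dim + 1) Y
  else tgtIter σ (X.dim - Y.dim + 1) X = Y.src

lemma embComp_assoc (a b v : List ℕ) :
    embComp a (embComp b v) = embComp (embComp a b) v := by
  induction a generalizing b v with
  | nil => simp [embComp]
  | cons x a ih =>
    cases b with
    | nil => simp [embComp]
    | cons y b =>
      cases v with
      | nil => simp [embComp]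
      | cons z v =>
        simp only [embComp] at ih ⊢
        simp [ih, Nat.add_assoc]

lemma embComp_incData (m a b k : ℕ) :
    embComp (incData m a k) (incData m b k) = incData m (a + b) k := by
  induction k with
  | zero => simp [incData, embComp]
  | succ k ih =>
    by_cases h : m = k + 1
    · simp [incData, h, embComp, List.zipWith_replicate]
    · simp only [incData, h, if_false]
      simp only [embComp] at ih ⊢
      simp [ih]

lemma compL_dim (ss : Diagram) (sc : List (ℕ × List ℕ)) :
    ∀ M : Diagram, ss.dim + 1 ≤ M.dim →
      (compL (.step ss sc) M).dim = M.dim := by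
  intro M
  induction M with
  | base g => simp [Diagram.dim]
  | step ms mc ih =>
    intro hM
    by_cases hc : ss.dim + 1 = ms.dim + 1
    · simp [compL, Diagram.dim, hc, vcomp]
    · have h1 : ss.dim + 1 ≤ ms.dim := by simp [Diagram.dim] at hM; omega
      simp [compL, Diagram.dim, hc, ih h1, show ¬ ss.dim = ms.dim by omega]

lemma compL_compL (ss ds : Diagram) (sc dc : List (ℕ × List ℕ))
    (h : ss.dim = ds.dim) :
    ∀ M : Diagram, ds.dim + 1 ≤ M.dim →
      compL (.step ss sc) (compL (.step ds dc) M)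
        = compL (.step ss (sc ++ dc)) M := by
  intro M
  induction M with
  | base g => simp [Diagram.dim]
  | step ms mc ih =>
    intro hM
    by_cases hc : ds.dim + 1 = ms.dim + 1
    · simp [compL, Diagram.dim, hc, vcomp, Diagram.cells, h]
    · have h1 : ds.dim + 1 ≤ ms.dim := by simp [Diagram.dim] at hM; omega
      have hd : (compL (.step ds dc) ms).dim = ms.dim := compL_dim ds dc ms h1
      have hcs : ¬ (ss.dim + 1 = ms.dim + 1) := by omega
      simp only [compL, Diagram.dim, hc, if_false, hd, hcs, h,
        Diagram.size, List.map_map]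
      rw [ih h1]
      congr 1
      apply List.map_congr_left
      intro x _
      simp [Function.comp, embComp_assoc, embComp_incData, Nat.add_comm]

/-- **Composition of inclusions.**  For well-defined n-diagrams `D, S` and a
well-defined l-diagram `M` with `l > n` such that the composites exist,
`inc(S, D∘M) ∘ inc(D, M) = inc(S∘D, M)` as embeddings
`M ↪ S∘(D∘M) = (S∘D)∘M` (equivalence of embeddings: the height data agrees
and the codomains agree). -/
theorem inc_comp (σ : Signature) (D S M : Diagram)
    (hdim : S.dim = D.dim) (h0 : 0 < D.dim) (hl : D.dim < M.dim)
    (hD : wdDiagram σ D) (hS : wdDiagram σ S) (hM : wdDiagram σ M)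
    (hSD : tgt σ S = D.src)
    (hDM : tgt σ D = srcIter (M.dim - D.dim + 1) M) :
    embComp (incData S.dim S.size M.dim) (incData D.dim D.size M.dim)
        = incData (comp S D).dim (comp S D).size M.dim ∧
      comp S (comp D M) = comp (comp S D) M := by
  obtain ⟨ds, dc, rfl⟩ : ∃ ds dc, D = .step ds dc := by
    cases D with
    | base g => simp [Diagram.dim] at h0
    | step s c => exact ⟨s, c, rfl⟩
  obtain ⟨ss, sc, rfl⟩ : ∃ ss sc, S = .step ss sc := by
    cases S with
    | base g => simp [Diagram.dim] at hdim
    | step s c => exact ⟨s, c, rfl⟩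
  have hd : ss.dim = ds.dim := by simpa [Diagram.dim] using hdim
  have hSDc : comp (Diagram.step ss sc) (Diagram.step ds dc)
      = Diagram.step ss (sc ++ dc) := by
    simp [comp, Diagram.dim, hd, compL, vcomp, Diagram.cells]
  have hdm : ds.dim + 1 ≤ M.dim := by
    have := hl; simp only [Diagram.dim] at this; omega
  constructor
  · rw [hSDc]
    simp only [Diagram.dim, Diagram.size, hd, List.length_append]
    rw [embComp_incData]
  · have h1 : comp (Diagram.step ds dc) M = compL (Diagram.step ds dc) M := by
      simp [comp, Diagram.dim]; intro h'; omega
    have h2 : (compL (Diagram.step ds dc) M).dim = M.dim := compL_dim ds dc M hdm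
    rw [hSDc, h1]
    have h3 : comp (Diagram.step ss sc) (compL (Diagram.step ds dc) M)
        = compL (Diagram.step ss sc) (compL (Diagram.step ds dc) M) := by
      have : ss.dim + 1 ≤ M.dim := by omega
      simp [comp, h2, Diagram.dim, this]
    have h4 : comp (Diagram.step ss (sc ++ dc)) M
        = compL (Diagram.step ss (sc ++ dc)) M := by
      have : ss.dim + 1 ≤ M.dim := by omega
      simp [comp, Diagram.dim, this]
    rw [h3, h4, compL_compL ss ds sc dc hd M hdm]

end QS
end

section
/- Left distributivity of whiskering over vertical composition: for an n-diagram D, an m-diagram S, and an l-diagram M, all well-defined, with l, n > m > 0, and writing a = min(n,l)−1 and b = min(m, max(n,l))−1 (so b < a), provided the composites exist, S ∘_b (D ∘_a M) = (S ∘_b D) ∘_a (S ∘_b M). -/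
/-!
Data structures for quasistrict higher categories (Bar–Vicary).
A 0-diagram is a single generator; an (n+1)-diagram is a source n-diagram
together with a list of cells, each a generator name with embedding data.
Embedding data between n-diagrams is a list of n heights; composition of
embeddings adds heights at every level, and the lifted embedding `Λ(e,T)`
has the same data as `e`.
-/

namespace QS

theorem dim_compL (S D : Diagram) : (compL S D).dim = D.dim := by
  induction D with
  | base g => rfl
  | step s c ih =>
    simp only [compL]
    split
    · rename_i h
      cases S with
      | base g => simp [Diagram.dim] at h
      | step s' c' =>
        simp only [Diagram.dim] at h
        simp [vcomp, Diagram.dim, h]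
    · simp [Diagram.dim, ih]

theorem dim_compR (D X : Diagram) : (compR D X).dim = D.dim := by
  induction D with
  | base g => rfl
  | step s c ih =>
    simp only [compR]
    split
    · simp [vcomp, Diagram.dim]
    · simp [Diagram.dim, ih]

theorem size_compL (S D : Diagram) (h : S.dim ≠ D.dim) :
    (compL S D).size = D.size := by
  cases D with
  | base g => rfl
  | step s c =>
    simp only [compL]
    rw [if_neg (by simpa [Diagram.dim] using h)]
    simp [Diagram.size]

theorem embComp_left_comm (a b v : List ℕ) :
    embComp a (embComp b v) = embComp b (embComp a v) := by
  induction a generalizing b v with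
  | nil => simp [embComp]
  | cons x xs ih =>
    cases b with
    | nil => simp [embComp]
    | cons y ys =>
      cases v with
      | nil => simp [embComp]
      | cons z zs =>
        simp only [embComp, List.zipWith_cons_cons] at *
        exact congrArg₂ _ (by omega) (ih ys zs)

theorem compL_compL_s18 (S D T : Diagram) (h1 : S.dim < D.dim) (h2 : D.dim ≤ T.dim) :
    compL S (compL D T) = compL (compL S D) (compL S T) := by
  induction T with
  | base g => simp [Diagram.dim] at h2; omega
  | step ts tc ih =>
    cases D with
    | base g => simp [Diagram.dim] at h1
    | step ds dc =>
      simp only [Diagram.dim] at h1 h2 ih ⊢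
      by_cases hnl : ds.dim + 1 = ts.dim + 1
      · have hts : ts.dim = ds.dim := by omega
        have hSne : S.dim ≠ ds.dim + 1 := by omega
        simp [compL, vcomp, Diagram.dim, dim_compL, hts, hSne, Diagram.cells,
          List.map_append]
      · have hlt : ds.dim + 1 ≤ ts.dim := by omega
        have hSne : S.dim ≠ ds.dim + 1 := by omega
        have hSne2 : S.dim ≠ ts.dim + 1 := by omega
        have key := ih hlt
        simp only [compL, Diagram.dim, Diagram.size, List.length_map,
          if_neg hSne, if_neg hSne2, if_neg hnl, dim_compL] at key ⊢
        simp only [hnl, ↓reduceIte, compL, Diagram.dim, dim_compL, hSne2, Diagram.size]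
        refine congrArg₂ _ key ?_
        simp only [List.map_map]
        refine List.map_congr_left fun x _ => ?_
        simp [Function.comp, embComp_left_comm]

theorem compL_compR (S D M : Diagram) (h1 : S.dim < M.dim) (h2 : M.dim ≤ D.dim) :
    compL S (compR D M) = compR (compL S D) (compL S M) := by
  induction D with
  | base g => simp [Diagram.dim] at h2; omega
  | step ds dc ih =>
    simp only [Diagram.dim] at h2 ih ⊢
    by_cases hml : M.dim = ds.dim + 1
    · cases M with
      | base g => simp [Diagram.dim] at h1
      | step ms mc =>
        simp only [Diagram.dim] at hml h1
        have hms : ms.dim = ds.dim := by omega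
        have hSne : S.dim ≠ ds.dim + 1 := by omega
        simp [compR, compL, vcomp, Diagram.dim, dim_compL, hms, hSne,
          Diagram.cells, List.map_append]
    · have hlt : M.dim ≤ ds.dim := by omega
      have hSne : S.dim ≠ ds.dim + 1 := by omega
      have key := ih hlt
      simp only [compR, compL, Diagram.dim, if_neg hml, if_neg hSne,
        dim_compR, dim_compL] at key ⊢
      exact congrArg₂ _ key rfl

/-- **Distributive diagram composition.**  For an n-diagram `D`, an m-diagram
`S` and an l-diagram `M`, all well-defined, with `l, n > m > 0`, provided
the composites exist, `S ∘_b (D ∘_a M) = (S ∘_b D) ∘_a (S ∘_b M)`, where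
`a = min(n,l) − 1` and `b = min(m, max(n,l)) − 1` are determined by the
dimensions (so each `∘` below is the unique composition of its two
arguments). -/
theorem comp_distrib (σ : Signature) (D S M : Diagram)
    (hm : 0 < S.dim) (hn : S.dim < D.dim) (hl : S.dim < M.dim)
    (hD : wdDiagram σ D) (hS : wdDiagram σ S) (hM : wdDiagram σ M)
    (hDM : composable σ D M) (hSD : composable σ S D)
    (hSM : composable σ S M) :
    comp S (comp D M) = comp (comp S D) (comp S M) := by
  have hmd : S.dim ≤ D.dim := le_of_lt hn
  have hmm : S.dim ≤ M.dim := le_of_lt hl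
  by_cases hnl : D.dim ≤ M.dim
  · simp only [comp, dim_compL, dim_compR, if_pos hnl, if_pos hmd, if_pos hmm]
    exact compL_compL_s18 S D M hn hnl
  · simp only [comp, dim_compL, dim_compR, if_neg hnl, if_pos hmd, if_pos hmm]
    exact compL_compR S D M hl (le_of_not_ge hnl)


end QS
end
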